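/- arXiv:1910.01120 — 2 statements merged into one kernel-verified Lean document; each statement's English description precedes it below -/
import Mathlib

section
/- Let M be a nonnegative irreducible real n×n matrix with n ≥ 1 and let B be a complex n×n matrix such that |B_{ij}| ≤ M_{ij} for all indices i, j. Then ρ(B) ≤ ρ(M). -/
open Matrix Polynomial

/-- The spectral radius of a complex square matrix: the maximum modulus of the roots
of its characteristic polynomial. -/
noncomputable def specRadC {n : ℕ} (B : Matrix (Fin n) (Fin n) ℂ) : ℝ :=
  sSup {r : ℝ | ∃ μ : ℂ, μ ∈ B.charpoly.roots ∧ ‖μ‖ = r}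

/-- The spectral radius of a real square matrix: the spectral radius of the matrix
regarded as a complex matrix. -/
noncomputable def specRad {n : ℕ} (A : Matrix (Fin n) (Fin n) ℝ) : ℝ :=
  specRadC (A.map (Complex.ofReal : ℝ → ℂ))

attribute [local instance] Matrix.linftyOpNormedRing Matrix.linftyOpNormedAlgebra

namespace SpecRadAux

variable {n : ℕ}

lemma my_eval_charpoly (A : Matrix (Fin n) (Fin n) ℂ) (μ : ℂ) :
    A.charpoly.eval μ = (Matrix.scalar (Fin n) μ - A).det := by
  rw [Matrix.charpoly, ← Polynomial.coe_evalRingHom, RingHom.map_det]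
  congr 1
  ext i j
  by_cases h : i = j <;>
    simp [charmatrix_apply, h, Matrix.sub_apply, Matrix.diagonal_apply, Matrix.scalar_apply]

lemma my_algebraMap_eq_scalar (ν : ℂ) :
    algebraMap ℂ (Matrix (Fin n) (Fin n) ℂ) ν = Matrix.scalar (Fin n) ν := by
  ext i j
  simp [Matrix.algebraMap_matrix_apply, Matrix.scalar_apply, Matrix.diagonal_apply]

lemma spec_sub_roots (A : Matrix (Fin n) (Fin n) ℂ) {ν : ℂ} (hν : ν ∈ spectrum ℂ A) :
    ν ∈ A.charpoly.roots := by
  rw [spectrum.mem_iff, my_algebraMap_eq_scalar, Matrix.isUnit_iff_isUnit_det,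
    isUnit_iff_ne_zero, not_not] at hν
  exact mem_roots'.2 ⟨A.charpoly_monic.ne_zero,
    by rw [Polynomial.IsRoot, my_eval_charpoly]; exact hν⟩

lemma root_iff_eig (B : Matrix (Fin n) (Fin n) ℂ) (μ : ℂ) (h : B.charpoly.IsRoot μ) :
    ∃ x : Fin n → ℂ, x ≠ 0 ∧ B.mulVec x = μ • x := by
  have hdet : (Matrix.scalar (Fin n) μ - B).det = 0 := by
    rw [← my_eval_charpoly]; exact h
  obtain ⟨v, hv0, hv⟩ := (Matrix.exists_mulVec_eq_zero_iff).2 hdet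
  refine ⟨v, hv0, ?_⟩
  have h2 : (Matrix.scalar (Fin n) μ - B).mulVec v = μ • v - B.mulVec v := by
    rw [Matrix.sub_mulVec]
    congr 1
    simp [Matrix.scalar_apply]
  rw [h2] at hv
  exact (sub_eq_zero.mp hv).symm

lemma entry_pow_le {M : Matrix (Fin n) (Fin n) ℝ} {B : Matrix (Fin n) (Fin n) ℂ}
    (hB : ∀ i j, ‖B i j‖ ≤ M i j) (k : ℕ) :
    ∀ i j, ‖(B ^ k) i j‖ ≤ (M ^ k) i j := by
  induction k with
  | zero =>
    intro i j
    by_cases h : i = j <;> simp [pow_zero, Matrix.one_apply, h]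
  | succ k ih =>
    intro i j
    rw [pow_succ, pow_succ, Matrix.mul_apply, Matrix.mul_apply]
    calc ‖∑ l, (B ^ k) i l * B l j‖
        ≤ ∑ l, ‖(B ^ k) i l * B l j‖ :=
          norm_sum_le Finset.univ (fun l => (B ^ k) i l * B l j)
      _ ≤ ∑ l, (M ^ k) i l * M l j := by
          refine Finset.sum_le_sum fun l _ => ?_
          rw [norm_mul]
          exact mul_le_mul (ih i l) (hB l j) (norm_nonneg _)
            (le_trans (norm_nonneg _) (ih i l))

lemma nnnorm_le_map {X : Matrix (Fin n) (Fin n) ℂ} {Y : Matrix (Fin n) (Fin n) ℝ}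
    (h : ∀ i j, ‖X i j‖ ≤ Y i j) :
    ‖X‖₊ ≤ ‖Y.map (Complex.ofReal : ℝ → ℂ)‖₊ := by
  rw [Matrix.linfty_opNNNorm_def, Matrix.linfty_opNNNorm_def]
  refine Finset.sup_le fun i _ => le_trans ?_ (Finset.le_sup (Finset.mem_univ i))
  refine Finset.sum_le_sum fun j _ => ?_
  have : ‖X i j‖ ≤ ‖(Matrix.map Y (Complex.ofReal : ℝ → ℂ)) i j‖ := by
    simp only [Matrix.map_apply, Complex.norm_real]
    exact le_trans (h i j) (le_abs_self _)
  exact this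

lemma map_pow_ofReal (M : Matrix (Fin n) (Fin n) ℝ) (k : ℕ) :
    (M.map (Complex.ofReal : ℝ → ℂ)) ^ k = (M ^ k).map (Complex.ofReal : ℝ → ℂ) := by
  induction k with
  | zero =>
    ext i j
    by_cases h : i = j <;> simp [Matrix.one_apply, h]
  | succ k ih =>
    rw [pow_succ, pow_succ, ih]
    ext i j
    simp [Matrix.mul_apply, Matrix.map_apply]

end SpecRadAux

theorem specRad_mono_of_abs_le {n : ℕ} (hn : 1 ≤ n)
    (M : Matrix (Fin n) (Fin n) ℝ)
    (hM : ∀ i j, 0 ≤ M i j)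
    (hirr : ∀ i j, ∃ k : ℕ, 1 ≤ k ∧ 0 < (M ^ k) i j)
    (B : Matrix (Fin n) (Fin n) ℂ)
    (hB : ∀ i j, ‖B i j‖ ≤ M i j) :
    specRadC B ≤ specRad M := by
  classical
  set A := M.map (Complex.ofReal : ℝ → ℂ) with hA
  set S : Set ℝ := {r | ∃ μ : ℂ, μ ∈ A.charpoly.roots ∧ ‖μ‖ = r} with hS
  have hSfin : S.Finite := by
    have : S = ↑(A.charpoly.roots.toFinset.image (fun z : ℂ => ‖z‖)) := by
      ext r
      simp [hS, Multiset.mem_toFinset, eq_comm]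
    rw [this]; exact Finset.finite_toSet _
  have hbdd : BddAbove S := hSfin.bddAbove
  have hdeg : 0 < A.charpoly.degree := by
    have h1 : A.charpoly.natDegree = n := by
      simpa using A.charpoly_natDegree_eq_dim
    rw [Polynomial.degree_eq_natDegree A.charpoly_monic.ne_zero, h1]
    exact_mod_cast hn
  obtain ⟨μ₀, hμ₀⟩ := Complex.exists_root hdeg
  have hS0 : ‖μ₀‖ ∈ S :=
    ⟨μ₀, mem_roots'.2 ⟨A.charpoly_monic.ne_zero, hμ₀⟩, rfl⟩
  have hsR : specRad M = sSup S := rfl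
  have h0 : 0 ≤ specRad M := by
    rw [hsR]
    exact le_trans (norm_nonneg μ₀) (le_csSup hbdd hS0)
  have hsrad : spectralRadius ℂ A ≤ ENNReal.ofReal (specRad M) := by
    simp only [spectralRadius]
    refine iSup₂_le fun ν hν => ?_
    rw [← enorm_eq_nnnorm, ← ofReal_norm]
    refine ENNReal.ofReal_le_ofReal ?_
    rw [hsR]
    exact le_csSup hbdd ⟨ν, SpecRadAux.spec_sub_roots A hν, rfl⟩
  refine Real.sSup_le ?_ h0
  rintro r ⟨μ, hμroots, rfl⟩
  obtain ⟨x, hx0, hx⟩ := SpecRadAux.root_iff_eig B μ (mem_roots'.1 hμroots).2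
  have hpow : ∀ k : ℕ, (B ^ k).mulVec x = μ ^ k • x := by
    intro k
    induction k with
    | zero => simp [Matrix.one_mulVec]
    | succ k ih =>
      rw [pow_succ, ← Matrix.mulVec_mulVec, hx, Matrix.mulVec_smul, ih, smul_smul,
        mul_comm, pow_succ]
  have hxnn : ‖x‖₊ ≠ 0 := by simp [hx0]
  have hnorm : ∀ k : ℕ, ‖μ‖₊ ^ k ≤ ‖A ^ k‖₊ := by
    intro k
    have h1 : ‖(B ^ k).mulVec x‖₊ ≤ ‖B ^ k‖₊ * ‖x‖₊ := Matrix.linfty_opNNNorm_mulVec _ _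
    rw [hpow k, nnnorm_smul, nnnorm_pow] at h1
    have h2 : ‖μ‖₊ ^ k ≤ ‖B ^ k‖₊ :=
      le_of_mul_le_mul_right h1 (pos_iff_ne_zero.2 hxnn)
    refine h2.trans ?_
    rw [hA, SpecRadAux.map_pow_ofReal]
    exact SpecRadAux.nnnorm_le_map (SpecRadAux.entry_pow_le hB k)
  have hle : (‖μ‖₊ : ENNReal) ≤ spectralRadius ℂ A := by
    refine ge_of_tendsto (spectrum.pow_nnnorm_pow_one_div_tendsto_nhds_spectralRadius A) ?_
    filter_upwards [Filter.eventually_ge_atTop 1] with k hk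
    have hk0 : (k : ℝ) ≠ 0 := by positivity
    have hcast : ((‖μ‖₊ : ENNReal)) ^ k ≤ (‖A ^ k‖₊ : ENNReal) := by
      rw [← ENNReal.coe_pow]
      exact_mod_cast hnorm k
    calc (‖μ‖₊ : ENNReal) = ((‖μ‖₊ : ENNReal) ^ k) ^ (1 / (k : ℝ)) := by
          rw [← ENNReal.rpow_natCast, ← ENNReal.rpow_mul, mul_one_div, div_self hk0,
            ENNReal.rpow_one]
      _ ≤ (‖A ^ k‖₊ : ENNReal) ^ (1 / (k : ℝ)) :=
          ENNReal.rpow_le_rpow hcast (by positivity)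
  have hfin : (‖μ‖₊ : ENNReal) ≤ ENNReal.ofReal (specRad M) := hle.trans hsrad
  rw [← enorm_eq_nnnorm, ← ofReal_norm] at hfin
  have := (ENNReal.ofReal_le_ofReal_iff h0).1 hfin
  simpa using this
end

section
/- Let M be a nonnegative irreducible real n×n matrix with n ≥ 1 and let B be a complex n×n matrix such that |B_{ij}| ≤ M_{ij} for all indices i, j. If ρ(B) = ρ(M), then |B_{ij}| = M_{ij} for all indices i, j. -/
open Matrix Polynomial Filter

lemma eval_charpoly_eq_det {n : ℕ} (E : Matrix (Fin n) (Fin n) ℂ) (μ : ℂ) :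
    E.charpoly.eval μ = (Matrix.scalar (Fin n) μ - E).det := by
  rw [Matrix.charpoly, eval_det, Matrix.matPolyEquiv_charmatrix]
  simp [Algebra.algebraMap_eq_smul_one]

lemma mem_roots_charpoly_iff {n : ℕ} (E : Matrix (Fin n) (Fin n) ℂ) (μ : ℂ) :
    μ ∈ E.charpoly.roots ↔ μ ∈ spectrum ℂ E := by
  rw [Polynomial.mem_roots (E.charpoly_monic.ne_zero), spectrum.mem_iff,
    Matrix.isUnit_iff_isUnit_det, isUnit_iff_ne_zero, not_ne_iff]
  have h1 : E.charpoly.IsRoot μ ↔ (Matrix.scalar (Fin n) μ - E).det = 0 := by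
    unfold Polynomial.IsRoot
    rw [eval_charpoly_eq_det]
  rw [h1]
  have hs : Matrix.scalar (Fin n) μ = algebraMap ℂ (Matrix (Fin n) (Fin n) ℂ) μ := by
    rw [Matrix.scalar_apply, Matrix.algebraMap_eq_diagonal]
    rfl
  rw [hs]

lemma specRadC_spec {n : ℕ} (hn : 1 ≤ n) (B : Matrix (Fin n) (Fin n) ℂ) :
    (∃ μ ∈ B.charpoly.roots, ‖μ‖ = specRadC B) ∧
      ∀ μ ∈ B.charpoly.roots, ‖μ‖ ≤ specRadC B := by
  have hroots : B.charpoly.roots ≠ 0 := by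
    have hcard : B.charpoly.roots.card = n := by
      rw [(Polynomial.splits_iff_card_roots.mp (IsAlgClosed.splits B.charpoly)),
        Matrix.charpoly_natDegree_eq_dim, Fintype.card_fin]
    intro h
    rw [h] at hcard
    simp at hcard
    omega
  obtain ⟨ν, hν⟩ := Multiset.exists_mem_of_ne_zero hroots
  have hSeq : {r : ℝ | ∃ μ : ℂ, μ ∈ B.charpoly.roots ∧ ‖μ‖ = r}
      = (fun μ : ℂ => ‖μ‖) '' ((B.charpoly.roots.toFinset : Finset ℂ) : Set ℂ) := by
    ext r
    constructor
    · rintro ⟨μ, h1, h2⟩; exact ⟨μ, by simpa using h1, h2⟩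
    · rintro ⟨μ, h1, h2⟩; exact ⟨μ, by simpa using h1, h2⟩
  have hfin : {r : ℝ | ∃ μ : ℂ, μ ∈ B.charpoly.roots ∧ ‖μ‖ = r}.Finite := by
    rw [hSeq]
    exact Set.Finite.image _ (B.charpoly.roots.toFinset : Finset ℂ).finite_toSet
  have hne : {r : ℝ | ∃ μ : ℂ, μ ∈ B.charpoly.roots ∧ ‖μ‖ = r}.Nonempty :=
    ⟨‖ν‖, ⟨ν, hν, rfl⟩⟩
  constructor
  · obtain ⟨μ, hμ, habs⟩ := hne.csSup_mem hfin
    exact ⟨μ, hμ, habs⟩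
  · intro μ hμ
    exact le_csSup hfin.bddAbove ⟨μ, hμ, rfl⟩

lemma exists_eigenvector {n : ℕ} (B : Matrix (Fin n) (Fin n) ℂ) {μ : ℂ}
    (hμ : μ ∈ B.charpoly.roots) :
    ∃ x : Fin n → ℂ, x ≠ 0 ∧ ∀ i, (B *ᵥ x) i = μ * x i := by
  have hroot := (Polynomial.mem_roots (B.charpoly_monic.ne_zero)).mp hμ
  have hdet : (Matrix.scalar (Fin n) μ - B).det = 0 := by
    rw [← eval_charpoly_eq_det]
    exact hroot
  obtain ⟨x, hx0, hxe⟩ := (Matrix.exists_mulVec_eq_zero_iff).mpr hdet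
  refine ⟨x, hx0, fun i => ?_⟩
  have h2 := congrFun hxe i
  rw [Matrix.sub_mulVec] at h2
  have h3 : ((Matrix.scalar (Fin n) μ) *ᵥ x) i = μ * x i := by
    rw [Matrix.scalar_apply]
    simp [Matrix.mulVec_diagonal]
  have h4 : ((Matrix.scalar (Fin n) μ) *ᵥ x) i - (B *ᵥ x) i = 0 := h2
  rw [h3] at h4
  exact (sub_eq_zero.mp h4).symm

lemma pow_entries_nonneg {n : ℕ} {M : Matrix (Fin n) (Fin n) ℝ} (hM : ∀ i j, 0 ≤ M i j)
    (k : ℕ) : ∀ i j, 0 ≤ (M ^ k) i j := by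
  induction k with
  | zero =>
    intro i j
    rw [pow_zero]
    by_cases h : i = j <;> simp [Matrix.one_apply, h]
  | succ k ih =>
    intro i j
    rw [pow_succ, Matrix.mul_apply]
    exact Finset.sum_nonneg fun l _ => mul_nonneg (ih i l) (hM l j)

lemma one_add_entries_nonneg {n : ℕ} {M : Matrix (Fin n) (Fin n) ℝ} (hM : ∀ i j, 0 ≤ M i j) :
    ∀ i j, 0 ≤ (1 + M) i j := by
  intro i j
  have h : (0:ℝ) ≤ (1 : Matrix (Fin n) (Fin n) ℝ) i j := by
    by_cases h : i = j <;> simp [Matrix.one_apply, h]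
  simpa [Matrix.add_apply] using add_nonneg h (hM i j)

lemma pow_le_one_add_pow {n : ℕ} {M : Matrix (Fin n) (Fin n) ℝ} (hM : ∀ i j, 0 ≤ M i j) :
    ∀ m k, k ≤ m → ∀ i j, (M ^ k) i j ≤ ((1 + M) ^ m) i j := by
  have h1M := one_add_entries_nonneg hM
  intro m
  induction m with
  | zero =>
    intro k hk i j
    interval_cases k
    exact le_refl _
  | succ m ih =>
    intro k hk i j
    have hexp : ((1 + M) ^ (m+1)) i j = ((1 + M) ^ m) i j + (((1 + M) ^ m) * M) i j := by
      rw [pow_succ, mul_add, mul_one, Matrix.add_apply]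
    rcases Nat.lt_or_ge k (m+1) with h | h
    · have := ih k (by omega) i j
      rw [hexp]
      have hnn : 0 ≤ (((1 + M) ^ m) * M) i j := by
        rw [Matrix.mul_apply]
        exact Finset.sum_nonneg fun l _ => mul_nonneg (pow_entries_nonneg h1M m i l) (hM l j)
      linarith
    · have hk' : k = m + 1 := by omega
      subst hk'
      rw [hexp, pow_succ, Matrix.mul_apply, Matrix.mul_apply]
      have hterm : ∀ l ∈ Finset.univ, (M ^ m) i l * M l j ≤ ((1 + M) ^ m) i l * M l j :=
        fun l _ => mul_le_mul_of_nonneg_right (ih m le_rfl i l) (hM l j)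
      have hsum := Finset.sum_le_sum hterm
      have hnn : 0 ≤ ((1 + M) ^ m) i j := pow_entries_nonneg h1M m i j
      linarith

lemma exists_one_add_pow_mulVec_pos {n : ℕ} {M : Matrix (Fin n) (Fin n) ℝ}
    (hM : ∀ i j, 0 ≤ M i j)
    (hirr : ∀ i j, ∃ k : ℕ, 1 ≤ k ∧ 0 < (M ^ k) i j)
    (v : Fin n → ℝ) (hv : ∀ i, 0 ≤ v i) (hv0 : v ≠ 0) :
    ∃ m : ℕ, ∀ i, 0 < (((1 + M) ^ m) *ᵥ v) i := by
  have h1M := one_add_entries_nonneg hM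
  obtain ⟨j0, hj0⟩ : ∃ j0, 0 < v j0 := by
    by_contra h
    push_neg at h
    exact hv0 (funext fun i => le_antisymm (h i) (hv i))
  choose k hk1 hkpos using fun i => hirr i j0
  refine ⟨Finset.univ.sup k, fun i => ?_⟩
  have hki : k i ≤ Finset.univ.sup k := Finset.le_sup (Finset.mem_univ i)
  have hpos : 0 < ((1 + M) ^ Finset.univ.sup k) i j0 :=
    lt_of_lt_of_le (hkpos i) (pow_le_one_add_pow hM _ _ hki i j0)
  rw [Matrix.mulVec, dotProduct]
  have hle : ((1 + M) ^ Finset.univ.sup k) i j0 * v j0 ≤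
      ∑ j, ((1 + M) ^ Finset.univ.sup k) i j * v j :=
    Finset.single_le_sum
      (fun l _ => mul_nonneg (pow_entries_nonneg h1M _ i l) (hv l)) (Finset.mem_univ j0)
  exact lt_of_lt_of_le (mul_pos hpos hj0) hle

lemma map_pow_ofReal {n : ℕ} (M : Matrix (Fin n) (Fin n) ℝ) (k : ℕ) :
    (M.map (Complex.ofReal : ℝ → ℂ)) ^ k = (M ^ k).map (Complex.ofReal : ℝ → ℂ) := by
  induction k with
  | zero => simp [Matrix.map_one Complex.ofReal Complex.ofReal_zero Complex.ofReal_one]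
  | succ k ih =>
    rw [pow_succ, pow_succ, ih]
    ext i j
    simp [Matrix.mul_apply, Matrix.map_apply]

lemma le_specRad_of_subinvariant {n : ℕ} (hn : 1 ≤ n) (M : Matrix (Fin n) (Fin n) ℝ)
    (hM : ∀ i j, 0 ≤ M i j) (c : ℝ) (hc : 0 < c) (w : Fin n → ℝ) (hw : ∀ i, 0 ≤ w i)
    (hw0 : w ≠ 0) (hsub : ∀ i, c * w i ≤ (M *ᵥ w) i) : c ≤ specRad M := by
  haveI : NeZero n := ⟨by omega⟩
  letI : SeminormedRing (Matrix (Fin n) (Fin n) ℂ) := Matrix.linftyOpSemiNormedRing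
  letI : NormedRing (Matrix (Fin n) (Fin n) ℂ) := Matrix.linftyOpNormedRing
  letI : NormedAlgebra ℂ (Matrix (Fin n) (Fin n) ℂ) := Matrix.linftyOpNormedAlgebra
  haveI : CompleteSpace (Matrix (Fin n) (Fin n) ℂ) := FiniteDimensional.complete ℂ _
  set A : Matrix (Fin n) (Fin n) ℂ := M.map (Complex.ofReal : ℝ → ℂ) with hA
  have hiter : ∀ m : ℕ, ∀ i, c ^ m * w i ≤ ((M ^ m) *ᵥ w) i := by
    intro m
    induction m with
    | zero => intro i; simp [Matrix.one_mulVec]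
    | succ m ih =>
      intro i
      have h1 : (M ^ (m+1)) *ᵥ w = (M ^ m) *ᵥ (M *ᵥ w) := by
        rw [Matrix.mulVec_mulVec, ← pow_succ]
      rw [h1]
      have h2 : ∀ j, c * w j ≤ (M *ᵥ w) j := hsub
      have h3 : ((M ^ m) *ᵥ fun j => c * w j) i ≤ ((M ^ m) *ᵥ (M *ᵥ w)) i := by
        rw [Matrix.mulVec, Matrix.mulVec, dotProduct, dotProduct]
        exact Finset.sum_le_sum fun j _ =>
          mul_le_mul_of_nonneg_left (h2 j) (pow_entries_nonneg hM m i j)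
      have h4 : ((M ^ m) *ᵥ fun j => c * w j) i = c * ((M ^ m) *ᵥ w) i := by
        rw [Matrix.mulVec, Matrix.mulVec, dotProduct, dotProduct,
          Finset.mul_sum]
        exact Finset.sum_congr rfl fun j _ => by ring
      calc c ^ (m+1) * w i = c * (c ^ m * w i) := by ring
        _ ≤ c * ((M ^ m) *ᵥ w) i := by
            exact mul_le_mul_of_nonneg_left (ih i) (le_of_lt hc)
        _ = ((M ^ m) *ᵥ fun j => c * w j) i := h4.symm
        _ ≤ _ := h3
  set wc : Fin n → ℂ := fun j => (w j : ℂ) with hwc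
  have hwc0 : wc ≠ 0 := by
    intro h
    apply hw0
    funext j
    have := congrFun h j
    simpa [hwc] using Complex.ofReal_eq_zero.mp this
  have hWpos : 0 < ‖wc‖ := norm_pos_iff.mpr hwc0
  obtain ⟨i0, hi0⟩ : ∃ i0, 0 < w i0 := by
    by_contra h
    push_neg at h
    exact hw0 (funext fun i => le_antisymm (h i) (hw i))
  set K : ℝ := w i0 / ‖wc‖ with hK
  have hKpos : 0 < K := div_pos hi0 hWpos
  have hnorm : ∀ m : ℕ, K * c ^ m ≤ ‖A ^ m‖ := by
    intro m
    have hAm : A ^ m = (M ^ m).map (Complex.ofReal : ℝ → ℂ) := map_pow_ofReal M m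
    have hmv : ∀ i, ((A ^ m) *ᵥ wc) i = (((M ^ m) *ᵥ w) i : ℂ) := by
      intro i
      rw [hAm, Matrix.mulVec, dotProduct, Matrix.mulVec, dotProduct]
      push_cast
      exact Finset.sum_congr rfl fun j _ => rfl
    have h5 : ‖((A ^ m) *ᵥ wc) i0‖ ≤ ‖(A ^ m) *ᵥ wc‖ := norm_le_pi_norm _ i0
    have h6 : ‖(A ^ m) *ᵥ wc‖ ≤ ‖A ^ m‖ * ‖wc‖ := Matrix.linfty_opNorm_mulVec _ _
    have h7 : ‖((A ^ m) *ᵥ wc) i0‖ = ((M ^ m) *ᵥ w) i0 := by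
      rw [hmv i0]
      have hnn : 0 ≤ ((M ^ m) *ᵥ w) i0 :=
        le_trans (by positivity) (hiter m i0)
      simp [Complex.norm_real, abs_of_nonneg hnn]
    have h8 : c ^ m * w i0 ≤ ‖A ^ m‖ * ‖wc‖ := by
      calc c ^ m * w i0 ≤ ((M ^ m) *ᵥ w) i0 := hiter m i0
        _ = ‖((A ^ m) *ᵥ wc) i0‖ := h7.symm
        _ ≤ ‖(A ^ m) *ᵥ wc‖ := h5
        _ ≤ ‖A ^ m‖ * ‖wc‖ := h6
    rw [hK]
    rw [div_mul_eq_mul_div, div_le_iff₀ hWpos]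
    calc w i0 * c ^ m = c ^ m * w i0 := by ring
      _ ≤ ‖A ^ m‖ * ‖wc‖ := h8
  have hmain : ENNReal.ofReal c ≤ spectralRadius ℂ A := by
    by_contra hcon
    push_neg at hcon
    set R : ENNReal := limsup (fun m : ℕ => (‖A ^ m‖₊ : ENNReal) ^ (1 / m : ℝ)) atTop with hR
    have hRlt : R < ENNReal.ofReal c :=
      lt_of_le_of_lt (spectrum.limsup_pow_nnnorm_pow_one_div_le_spectralRadius A) hcon
    have hRtop : R ≠ ⊤ := ne_top_of_lt hRlt
    have hrc : R.toReal < c := by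
      rw [← ENNReal.lt_ofReal_iff_toReal_lt hRtop]
      exact hRlt
    set c' : ℝ := (R.toReal + c) / 2 with hc'
    have hc'pos : 0 < c' := by
      have := ENNReal.toReal_nonneg (a := R)
      rw [hc']; linarith
    have hc'c : c' < c := by rw [hc']; linarith
    have hRc' : R < ENNReal.ofReal c' := by
      rw [ENNReal.lt_ofReal_iff_toReal_lt hRtop, hc']
      linarith
    have hev1 : ∀ᶠ m : ℕ in atTop, (‖A ^ m‖₊ : ENNReal) ^ (1 / m : ℝ) < ENNReal.ofReal c' :=
      Filter.eventually_lt_of_limsup_lt hRc'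
    have hratio : (0:ℝ) ≤ c' / c := by positivity
    have hratio1 : c' / c < 1 := (div_lt_one hc).mpr hc'c
    have hev2 : ∀ᶠ m : ℕ in atTop, (c' / c) ^ m < K :=
      (tendsto_pow_atTop_nhds_zero_of_lt_one hratio hratio1).eventually_lt_const hKpos
    obtain ⟨m, ⟨hm1, hm2⟩, hm3⟩ := ((hev1.and hev2).and (eventually_ge_atTop 1)).exists
    have hm0 : (m : ℝ) ≠ 0 := Nat.cast_ne_zero.mpr (by omega)
    have h9 : ((‖A ^ m‖₊ : ENNReal) ^ (1 / m : ℝ)) ^ m < (ENNReal.ofReal c') ^ m :=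
      ENNReal.pow_lt_pow_left (by omega) hm1
    have h10 : ((‖A ^ m‖₊ : ENNReal) ^ (1 / m : ℝ)) ^ m = (‖A ^ m‖₊ : ENNReal) := by
      rw [← ENNReal.rpow_natCast (((‖A ^ m‖₊ : ENNReal)) ^ (1 / m : ℝ)) m, ← ENNReal.rpow_mul,
        one_div, inv_mul_cancel₀ hm0, ENNReal.rpow_one]
    have h11 : (‖A ^ m‖₊ : ENNReal) < ENNReal.ofReal (c' ^ m) := by
      rw [← h10, ENNReal.ofReal_pow (le_of_lt hc'pos)]
      exact h9
    have h12 : ‖A ^ m‖ < c' ^ m := by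
      rw [← enorm_eq_nnnorm, ← ofReal_norm] at h11
      exact (ENNReal.ofReal_lt_ofReal_iff_of_nonneg (norm_nonneg _)).mp h11
    have h13 : c' ^ m < K * c ^ m := by
      rw [div_pow, div_lt_iff₀ (by positivity)] at hm2
      linarith
    linarith [hnorm m]
  have hub : spectralRadius ℂ A ≤ ENNReal.ofReal (specRad M) := by
    rw [spectralRadius]
    refine iSup₂_le fun μ hμ => ?_
    have habs : ‖μ‖ ≤ specRad M :=
      (specRadC_spec hn A).2 μ ((mem_roots_charpoly_iff A μ).mpr hμ)
    rw [← enorm_eq_nnnorm, ← ofReal_norm]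
    exact ENNReal.ofReal_le_ofReal (by simpa using habs)
  have hfin := le_trans hmain hub
  rcases le_or_gt c (specRad M) with h | h
  · exact h
  · exact absurd (lt_of_le_of_lt hfin ((ENNReal.ofReal_lt_ofReal_iff hc).mpr h)) (lt_irrefl _)

theorem abs_eq_of_specRad_eq {n : ℕ} (hn : 1 ≤ n)
    (M : Matrix (Fin n) (Fin n) ℝ)
    (hM : ∀ i j, 0 ≤ M i j)
    (hirr : ∀ i j, ∃ k : ℕ, 1 ≤ k ∧ 0 < (M ^ k) i j)
    (B : Matrix (Fin n) (Fin n) ℂ)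
    (hB : ∀ i j, ‖B i j‖ ≤ M i j)
    (heq : specRadC B = specRad M) :
    ∀ i j, ‖B i j‖ = M i j := by
  haveI : NeZero n := ⟨by omega⟩
  haveI : Nonempty (Fin n) := ⟨⟨0, by omega⟩⟩
  have h1M := one_add_entries_nonneg hM
  set ρ : ℝ := specRad M with hρdef
  obtain ⟨⟨μ, hμroot, hμabs⟩, -⟩ := specRadC_spec hn B
  have hμρ : ‖μ‖ = ρ := by rw [hμabs, heq]
  have hρ0 : 0 ≤ ρ := hμρ ▸ norm_nonneg μ
  obtain ⟨x, hx0, heig⟩ := exists_eigenvector B hμroot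
  set z : Fin n → ℝ := fun i => ‖x i‖ with hz
  have hznn : ∀ i, 0 ≤ z i := fun i => norm_nonneg _
  have hz0 : z ≠ 0 := by
    intro h
    apply hx0
    funext i
    have h2 := congrFun h i
    exact norm_eq_zero.mp h2
  have habsle : ∀ i, ρ * z i ≤ ∑ j', ‖B i j'‖ * z j' := by
    intro i
    have h1 : ‖(B *ᵥ x) i‖ = ρ * z i := by
      rw [heig i, norm_mul, hμρ]
    calc ρ * z i = ‖(B *ᵥ x) i‖ := h1.symm
      _ ≤ ∑ j', ‖B i j' * x j'‖ := by
          rw [Matrix.mulVec, dotProduct]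
          exact norm_sum_le _ _
      _ = ∑ j', ‖B i j'‖ * z j' :=
          Finset.sum_congr rfl fun j' _ => norm_mul _ _
  have hsub : ∀ i, ρ * z i ≤ (M *ᵥ z) i := by
    intro i
    refine le_trans (habsle i) ?_
    rw [Matrix.mulVec, dotProduct]
    exact Finset.sum_le_sum fun j _ => mul_le_mul_of_nonneg_right (hB i j) (hznn j)
  -- step: M *ᵥ z = ρ • z
  have hMz : ∀ i, (M *ᵥ z) i = ρ * z i := by
    by_contra hcon
    push_neg at hcon
    obtain ⟨i2, hi2⟩ := hcon
    set y : Fin n → ℝ := fun i => (M *ᵥ z) i - ρ * z i with hy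
    have hynn : ∀ i, 0 ≤ y i := fun i => by
      rw [hy]; simp only []; linarith [hsub i]
    have hy0 : y ≠ 0 := by
      intro h
      apply hi2
      have h2 := congrFun h i2
      simp only [hy, Pi.zero_apply] at h2
      linarith
    obtain ⟨m1, hm1⟩ := exists_one_add_pow_mulVec_pos hM hirr y hynn hy0
    set w : Fin n → ℝ := ((1 + M) ^ m1) *ᵥ z with hw
    have hwnn : ∀ i, 0 ≤ w i := fun i => by
      rw [hw, Matrix.mulVec, dotProduct]
      exact Finset.sum_nonneg fun j _ =>
        mul_nonneg (pow_entries_nonneg h1M m1 i j) (hznn j)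
    have hcomm : M * (1 + M) ^ m1 = (1 + M) ^ m1 * M := by
      have hc : Commute M (1 + M) := Commute.add_right (Commute.one_right M) (Commute.refl M)
      exact (hc.pow_right m1).eq
    have hid : ∀ i, (((1 + M) ^ m1) *ᵥ y) i = (M *ᵥ w) i - ρ * w i := by
      intro i
      have e1 : (((1 + M) ^ m1) *ᵥ y) i
          = (((1 + M) ^ m1) *ᵥ (M *ᵥ z)) i - ρ * (((1 + M) ^ m1) *ᵥ z) i := by
        rw [Matrix.mulVec, Matrix.mulVec, Matrix.mulVec, dotProduct, dotProduct,
          dotProduct, Finset.mul_sum, ← Finset.sum_sub_distrib]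
        refine Finset.sum_congr rfl fun j _ => ?_
        rw [hy]
        ring
      have e2 : ((1 + M) ^ m1) *ᵥ (M *ᵥ z) = M *ᵥ w := by
        rw [hw, Matrix.mulVec_mulVec, Matrix.mulVec_mulVec, ← hcomm]
      rw [e1, e2, hw]
    have hdpos : ∀ i, 0 < (M *ᵥ w) i - ρ * w i := fun i => by
      rw [← hid i]; exact hm1 i
    have hw0 : w ≠ 0 := by
      intro h
      have h2 := hdpos (Classical.arbitrary (Fin n))
      rw [h] at h2
      simp [Matrix.mulVec_zero] at h2
    obtain ⟨i1, hi1⟩ : ∃ i, 0 < w i := by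
      by_contra h
      push_neg at h
      exact hw0 (funext fun i => le_antisymm (h i) (hwnn i))
    set dmin : ℝ := Finset.univ.inf' Finset.univ_nonempty (fun i => (M *ᵥ w) i - ρ * w i)
      with hdmin_def
    set wmax : ℝ := Finset.univ.sup' Finset.univ_nonempty w with hwmax_def
    have hdmin : 0 < dmin := by
      rw [hdmin_def, Finset.lt_inf'_iff]
      exact fun i _ => hdpos i
    have hwmax : 0 < wmax :=
      lt_of_lt_of_le hi1 (Finset.le_sup' w (Finset.mem_univ i1))
    set ε : ℝ := dmin / wmax with hε_def
    have hε : 0 < ε := div_pos hdmin hwmax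
    have hsub2 : ∀ i, (ρ + ε) * w i ≤ (M *ᵥ w) i := by
      intro i
      have h1 : dmin ≤ (M *ᵥ w) i - ρ * w i := Finset.inf'_le _ (Finset.mem_univ i)
      have h2 : w i ≤ wmax := Finset.le_sup' w (Finset.mem_univ i)
      have h3 : ε * w i ≤ ε * wmax := mul_le_mul_of_nonneg_left h2 (le_of_lt hε)
      have h4 : ε * wmax = dmin := by
        rw [hε_def]
        field_simp
      nlinarith
    have hle := le_specRad_of_subinvariant hn M hM (ρ + ε) (by linarith) w hwnn hw0 hsub2
    rw [← hρdef] at hle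
    linarith
  -- positivity of z
  obtain ⟨m2, hm2⟩ := exists_one_add_pow_mulVec_pos hM hirr z hznn hz0
  have hiter2 : ∀ m : ℕ, ∀ i, (((1 + M) ^ m) *ᵥ z) i = (1 + ρ) ^ m * z i := by
    intro m
    induction m with
    | zero => intro i; simp [Matrix.one_mulVec]
    | succ m ih =>
      intro i
      have h1 : ((1 + M) ^ (m+1)) *ᵥ z = ((1 + M) ^ m) *ᵥ ((1 + M) *ᵥ z) := by
        rw [Matrix.mulVec_mulVec, ← pow_succ]
      have h2 : (1 + M) *ᵥ z = fun j => (1 + ρ) * z j := by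
        funext j
        rw [Matrix.add_mulVec, Matrix.one_mulVec]
        have := hMz j
        simp only [Pi.add_apply]
        rw [this]
        ring
      have h3 : (((1 + M) ^ m) *ᵥ fun j => (1 + ρ) * z j) i
          = (1 + ρ) * (((1 + M) ^ m) *ᵥ z) i := by
        rw [Matrix.mulVec, Matrix.mulVec, dotProduct, dotProduct,
          Finset.mul_sum]
        exact Finset.sum_congr rfl fun j _ => by ring
      rw [h1, h2, h3, ih i]
      ring
  have hzpos : ∀ i, 0 < z i := by
    intro i
    have h2 := hm2 i
    rw [hiter2 m2 i] at h2
    have hp : 0 < (1 + ρ) ^ m2 := pow_pos (by linarith) m2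
    rcases mul_pos_iff.mp h2 with ⟨_, h⟩ | ⟨h', _⟩
    · exact h
    · linarith
  -- conclusion
  intro i j
  have h3 : ∑ j', M i j' * z j' = ρ * z i := by
    have := hMz i
    rw [Matrix.mulVec, dotProduct] at this
    exact this
  have h2 : ∑ j', ‖B i j'‖ * z j' ≤ ∑ j', M i j' * z j' :=
    Finset.sum_le_sum fun j' _ => mul_le_mul_of_nonneg_right (hB i j') (hznn j')
  have hsum0 : ∑ j', (M i j' - ‖B i j'‖) * z j' = 0 := by
    have e : ∑ j', (M i j' - ‖B i j'‖) * z j'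
        = ∑ j', M i j' * z j' - ∑ j', ‖B i j'‖ * z j' := by
      rw [← Finset.sum_sub_distrib]
      exact Finset.sum_congr rfl fun j' _ => by ring
    rw [e]
    have h1 := habsle i
    linarith [h3, h2, h1]
  have hterm := (Finset.sum_eq_zero_iff_of_nonneg
    (fun j' _ => mul_nonneg (by linarith [hB i j']) (hznn j'))).mp hsum0 j (Finset.mem_univ j)
  rcases mul_eq_zero.mp hterm with h | h
  · linarith
  · exact absurd h (ne_of_gt (hzpos j))
end
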